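/- Let M > 0, let 0 < r₁ ≤ r₀ < 2M, let b ∈ (0, ∞), and let γ = (t, x) : [0, b) → ℝ × ℝ³ be a C¹ curve with r₁ ≤ ‖x(τ)‖ ≤ r₀ and Q_M(t'(τ), x'(τ), x(τ)) = −1 for every τ ∈ [0, b). Then the limit (t_M, x_M) := lim_{τ → b⁻} γ(τ) exists in ℝ × ℝ³ and satisfies r₁ ≤ ‖x_M‖ ≤ r₀; in particular the limit point lies in M_Sch, so γ admits a continuous extension to [0, b] with values in M_Sch. -/

import Mathlib

set_option maxHeartbeats 1000000

open Set Filter Topology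

lemma qm_est {M r₁ r₀ r u gv nv : ℝ} (hM : 0 < M) (h1 : 0 < r₁) (h10 : r₁ ≤ r₀)
    (h0 : r₀ < 2*M) (hr1 : r₁ ≤ r) (hr0 : r ≤ r₀) (hnv : 0 ≤ nv)
    (hCS : gv^2 ≤ r^2 * nv^2)
    (hQ : (2*M/r - 1)*u^2 + nv^2 - (2*M/((2*M - r)*r^2))*gv^2 = -1) :
    r₁*(2*M - r₀) ≤ gv^2 ∧ (2*M - r₀)^2 * u^2 ≤ gv^2 ∧
      (2*M - r₀)*r₁^2*nv^2 ≤ 2*M*gv^2 := by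
  have hrpos : 0 < r := lt_of_lt_of_le h1 hr1
  have hA : 0 < 2*M - r := by linarith
  have hA0 : 0 < 2*M - r₀ := by linarith
  have E1 : 2*M*gv^2 = (1 + nv^2)*((2*M - r)*r^2) + (2*M - r)^2*r*u^2 := by
    field_simp at hQ
    nlinarith [hQ]
  have E2 : (2*M - r)*r + (2*M - r)^2*u^2 ≤ gv^2 := by
    have h := mul_le_mul_of_nonneg_left hCS hA.le
    have : r*((2*M - r)*r + (2*M - r)^2*u^2) ≤ r*gv^2 := by nlinarith [E1, h]
    exact le_of_mul_le_mul_left (by linarith) hrpos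
  refine ⟨?_, ?_, ?_⟩
  · nlinarith [E2, sq_nonneg u, mul_nonneg (sub_nonneg.2 hr1) hA0.le,
      mul_nonneg (sub_nonneg.2 (le_of_lt (lt_of_le_of_lt hr0 h0))) h1.le]
  · nlinarith [E2, sq_nonneg u, mul_nonneg (mul_nonneg hA.le hA0.le) (sq_nonneg u),
      mul_pos hA hA0, mul_nonneg hrpos.le hA.le]
  · have h3 : (2*M - r₀)*r₁^2 ≤ (2*M - r)*r^2 :=
      mul_le_mul (by linarith) (by nlinarith) (by positivity) hA.le
    have h4 := mul_le_mul_of_nonneg_left h3 (sq_nonneg nv)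
    have h5 : 0 ≤ (2*M - r)^2*r*u^2 := by positivity
    have h6 : 0 ≤ (2*M - r)*r^2 := by positivity
    linarith [E1, h4, h5, h6]



/-- The Schwarzschild quadratic form of mass `M`, evaluated on a velocity `(t', x')`
at a point with spatial part `x` (where `0 < ‖x‖ < 2M`). -/
noncomputable def QM (M : ℝ) (t' : ℝ) (x' x : EuclideanSpace ℝ (Fin 3)) : ℝ :=
  (2 * M / ‖x‖ - 1) * t' ^ 2 + ‖x'‖ ^ 2
    - (2 * M / ((2 * M - ‖x‖) * ‖x‖ ^ 2)) * (inner ℝ x x' : ℝ) ^ 2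

/-- Let `M > 0`, let `0 < r₁ ≤ r₀ < 2M`, let `b ∈ (0, ∞)`, and let
`γ = (t, x) : [0, b) → ℝ × ℝ³` be a C¹ curve with `r₁ ≤ ‖x(τ)‖ ≤ r₀` and
`Q_M(t'(τ), x'(τ), x(τ)) = −1` for every `τ ∈ [0, b)`. Then the limit
`(t_M, x_M) := lim_{τ → b⁻} γ(τ)` exists in `ℝ × ℝ³` and satisfies
`r₁ ≤ ‖x_M‖ ≤ r₀`; in particular the limit point lies in `M_Sch`, so `γ` admits a
continuous extension to `[0, b]` with values in `M_Sch`. -/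
theorem timelike_curve_extends_to_endpoint (M : ℝ) (hM : 0 < M)
    (r₁ r₀ : ℝ) (h1 : 0 < r₁) (h10 : r₁ ≤ r₀) (h0 : r₀ < 2 * M)
    (b : ℝ) (hb : 0 < b)
    (t t' : ℝ → ℝ) (x x' : ℝ → EuclideanSpace ℝ (Fin 3))
    (ht : ∀ τ ∈ Set.Ico 0 b, HasDerivWithinAt t (t' τ) (Set.Ico 0 b) τ)
    (hx : ∀ τ ∈ Set.Ico 0 b, HasDerivWithinAt x (x' τ) (Set.Ico 0 b) τ)
    (ht'c : ContinuousOn t' (Set.Ico 0 b)) (hx'c : ContinuousOn x' (Set.Ico 0 b))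
    (hr : ∀ τ ∈ Set.Ico 0 b, r₁ ≤ ‖x τ‖ ∧ ‖x τ‖ ≤ r₀)
    (hQ : ∀ τ ∈ Set.Ico 0 b, QM M (t' τ) (x' τ) (x τ) = -1) :
    ∃ p : ℝ × EuclideanSpace ℝ (Fin 3),
      Filter.Tendsto (fun τ => (t τ, x τ)) (nhdsWithin b (Set.Iio b)) (nhds p) ∧
      r₁ ≤ ‖p.2‖ ∧ ‖p.2‖ ≤ r₀ ∧
      ∃ γ' : ℝ → ℝ × EuclideanSpace ℝ (Fin 3),
        ContinuousOn γ' (Set.Icc 0 b) ∧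
        (∀ τ ∈ Set.Ico 0 b, γ' τ = (t τ, x τ)) ∧
        ∀ τ ∈ Set.Icc 0 b, 0 < ‖(γ' τ).2‖ ∧ ‖(γ' τ).2‖ < 2 * M := by
  classical
  set I : Set ℝ := Set.Ico (0:ℝ) b with hIdef
  have h2M : 0 < 2*M - r₀ := by linarith
  have h0I : (0:ℝ) ∈ I := ⟨le_refl 0, hb⟩
  have hxc : ContinuousOn x I := fun τ hτ => (hx τ hτ).continuousWithinAt
  have htc : ContinuousOn t I := fun τ hτ => (ht τ hτ).continuousWithinAt
  set g : ℝ → ℝ := fun τ => (inner ℝ (x τ) (x' τ) : ℝ) with hgdef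
  have hgc : ContinuousOn g I := hxc.inner hx'c
  -- pointwise estimates
  have hest : ∀ τ ∈ I, r₁*(2*M - r₀) ≤ (g τ)^2 ∧ (2*M - r₀)^2 * (t' τ)^2 ≤ (g τ)^2 ∧
      (2*M - r₀)*r₁^2*‖x' τ‖^2 ≤ 2*M*(g τ)^2 := by
    intro τ hτ
    obtain ⟨ha, hb2⟩ := hr τ hτ
    have hCS : (g τ)^2 ≤ ‖x τ‖^2 * ‖x' τ‖^2 := by
      have h := abs_real_inner_le_norm (x τ) (x' τ)
      calc (g τ)^2 = |g τ|^2 := (sq_abs _).symm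
        _ ≤ (‖x τ‖*‖x' τ‖)^2 := pow_le_pow_left₀ (abs_nonneg _) h 2
        _ = ‖x τ‖^2 * ‖x' τ‖^2 := by ring
    have hq := hQ τ hτ
    rw [QM] at hq
    exact qm_est hM h1 h10 h0 ha hb2 (norm_nonneg _) hCS hq
  have hgne : ∀ τ ∈ I, g τ ≠ 0 := by
    intro τ hτ h
    have := (hest τ hτ).1
    rw [h] at this
    nlinarith
  -- constant sign
  set σ : ℝ := if 0 < g 0 then 1 else -1 with hσdef
  have hσg : ∀ τ ∈ I, 0 < σ * g τ := by
    intro τ hτ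
    have hIcc : Set.Icc 0 τ ⊆ I := fun a ha => ⟨ha.1, lt_of_le_of_lt ha.2 hτ.2⟩
    have hgcont : ContinuousOn g (Set.Icc 0 τ) := hgc.mono hIcc
    by_cases h0g : 0 < g 0
    · rw [hσdef, if_pos h0g, one_mul]
      rcases (hgne τ hτ).lt_or_gt with hneg | hpos
      · exfalso
        have : (0:ℝ) ∈ Set.Icc (g τ) (g 0) := ⟨hneg.le, h0g.le⟩
        obtain ⟨a, ha, hga⟩ := intermediate_value_Icc' hτ.1 hgcont this
        exact hgne a (hIcc ha) hga
      · exact hpos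
    · have h0g' : g 0 < 0 := (hgne 0 h0I).lt_or_gt.resolve_right h0g
      rw [hσdef, if_neg h0g]
      rcases (hgne τ hτ).lt_or_gt with hneg | hpos
      · linarith
      · exfalso
        have : (0:ℝ) ∈ Set.Icc (g 0) (g τ) := ⟨h0g'.le, hpos.le⟩
        obtain ⟨a, ha, hga⟩ := intermediate_value_Icc hτ.1 hgcont this
        exact hgne a (hIcc ha) hga
  have hσ1 : σ = 1 ∨ σ = -1 := by
    rw [hσdef]; split <;> simp
  have hσabs : ∀ τ ∈ I, |g τ| = σ * g τ := by
    intro τ hτ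
    have h := hσg τ hτ
    rcases hσ1 with h1' | h1' <;> rw [h1'] at h ⊢
    · rw [one_mul] at h ⊢; exact abs_of_pos h
    · have : g τ < 0 := by linarith
      rw [abs_of_neg this]; ring
  -- constants
  set K₁ : ℝ := Real.sqrt (2*M/((2*M - r₀)*r₁^2)) with hK₁def
  set K₂ : ℝ := 1/(2*M - r₀) with hK₂def
  set C : ℝ := max K₁ K₂ with hCdef
  have hK₂pos : 0 < K₂ := by rw [hK₂def]; positivity
  have hCpos : 0 < C := lt_of_lt_of_le hK₂pos (le_max_right _ _)
  -- velocity bound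
  have hvel : ∀ τ ∈ I, ‖((t' τ, x' τ) : ℝ × EuclideanSpace ℝ (Fin 3))‖ ≤ C * (σ * g τ) := by
    intro τ hτ
    have hG : 0 < σ * g τ := hσg τ hτ
    have hGabs : (σ * g τ)^2 = (g τ)^2 := by
      rw [← hσabs τ hτ, sq_abs]
    have ht'bd : |t' τ| ≤ K₂ * (σ * g τ) := by
      have h2 := (hest τ hτ).2.1
      have h2' : ((2*M - r₀) * |t' τ|)^2 ≤ (σ * g τ)^2 := by
        rw [hGabs, mul_pow, sq_abs]; exact h2
      have h3 : (2*M - r₀) * |t' τ| ≤ σ * g τ :=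
        (pow_le_pow_iff_left₀ (by positivity) hG.le two_ne_zero).1 h2'
      rw [hK₂def]
      rw [div_mul_eq_mul_div, le_div_iff₀ h2M, one_mul]
      linarith [h3]
    have hx'bd : ‖x' τ‖ ≤ K₁ * (σ * g τ) := by
      have h3 := (hest τ hτ).2.2
      have hK₁sq : K₁^2 = 2*M/((2*M - r₀)*r₁^2) := Real.sq_sqrt (by positivity)
      have h4 : ‖x' τ‖^2 ≤ (K₁ * (σ * g τ))^2 := by
        rw [mul_pow, hK₁sq, hGabs, div_mul_eq_mul_div, le_div_iff₀ (by positivity)]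
        linarith [h3]
      have hK₁0 : 0 ≤ K₁ := Real.sqrt_nonneg _
      exact (pow_le_pow_iff_left₀ (norm_nonneg _) (by positivity) two_ne_zero).1 h4
    rw [Prod.norm_def]
    apply max_le
    · calc ‖t' τ‖ = |t' τ| := rfl
        _ ≤ K₂ * (σ * g τ) := ht'bd
        _ ≤ C * (σ * g τ) := mul_le_mul_of_nonneg_right (le_max_right _ _) hG.le
    · exact hx'bd.trans (mul_le_mul_of_nonneg_right (le_max_left _ _) hG.le)
  -- the monotone function F
  set F : ℝ → ℝ := fun τ => σ * (inner ℝ (x τ) (x τ) : ℝ) with hFdef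
  have hF' : ∀ τ ∈ I, HasDerivWithinAt F (σ * (2 * g τ)) I τ := by
    intro τ hτ
    have h := ((hx τ hτ).inner ℝ (hx τ hτ)).const_mul σ
    have he : σ * ((inner ℝ (x τ) (x' τ) : ℝ) + (inner ℝ (x' τ) (x τ) : ℝ)) = σ * (2 * g τ) := by
      simp only [hgdef]
      rw [real_inner_comm (x τ) (x' τ)]; ring
    rwa [he] at h
  have hFc : ContinuousOn F I := continuousOn_const.mul (hxc.inner hxc)
  have hFbdd : ∀ τ ∈ I, F τ ≤ r₀^2 := by
    intro τ hτ
    have h : (inner ℝ (x τ) (x τ) : ℝ) = ‖x τ‖^2 := real_inner_self_eq_norm_sq _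
    have h2 : ‖x τ‖^2 ≤ r₀^2 := pow_le_pow_left₀ (norm_nonneg _) (hr τ hτ).2 2
    have h3 : σ * (inner ℝ (x τ) (x τ) : ℝ) ≤ (inner ℝ (x τ) (x τ) : ℝ) := by
      rcases hσ1 with h' | h' <;> rw [h'] <;> nlinarith [sq_nonneg ‖x τ‖, h]
    calc F τ ≤ (inner ℝ (x τ) (x τ) : ℝ) := h3
      _ = ‖x τ‖^2 := h
      _ ≤ r₀^2 := h2
  -- key comparison estimate
  have hkey : ∀ s ∈ I, ∀ τ, s ≤ τ → τ < b →
      ‖((t τ, x τ) : ℝ × EuclideanSpace ℝ (Fin 3)) - (t s, x s)‖ ≤ 2*C*(F τ - F s) := by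
    intro s hs τ hsτ hτb
    have hsub : Set.Icc s τ ⊆ I := fun a ha => ⟨le_trans hs.1 ha.1, lt_of_le_of_lt ha.2 hτb⟩
    have hmem : ∀ a ∈ Set.Ico s τ, I ∈ 𝓝[Set.Ici a] a := by
      intro a ha
      have haI : a ∈ I := ⟨le_trans hs.1 ha.1, lt_trans ha.2 hτb⟩
      exact mem_nhdsWithin.2 ⟨Set.Iio b, isOpen_Iio, haI.2,
        fun z hz => ⟨le_trans haI.1 hz.2, hz.1⟩⟩
    have hφc : ContinuousOn (fun a => ((t a, x a) : ℝ × EuclideanSpace ℝ (Fin 3)) - (t s, x s))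
        (Set.Icc s τ) := (((htc.mono hsub).prodMk (hxc.mono hsub)).sub continuousOn_const)
    have hφ' : ∀ a ∈ Set.Ico s τ,
        HasDerivWithinAt (fun a => ((t a, x a) : ℝ × EuclideanSpace ℝ (Fin 3)) - (t s, x s))
          ((t' a, x' a)) (Set.Ici a) a := by
      intro a ha
      have haI : a ∈ I := ⟨le_trans hs.1 ha.1, lt_trans ha.2 hτb⟩
      exact ((((ht a haI).prodMk (hx a haI)).sub_const _)).mono_of_mem_nhdsWithin (hmem a ha)
    have hB' : ∀ a ∈ Set.Ico s τ,
        HasDerivWithinAt (fun a => 2*C*(F a - F s)) (2*C*(σ * (2 * g a))) (Set.Ici a) a := by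
      intro a ha
      have haI : a ∈ I := ⟨le_trans hs.1 ha.1, lt_trans ha.2 hτb⟩
      exact (((hF' a haI).sub_const _).const_mul (2*C)).mono_of_mem_nhdsWithin (hmem a ha)
    have hBc : ContinuousOn (fun a => 2*C*(F a - F s)) (Set.Icc s τ) :=
      continuousOn_const.mul ((hFc.mono hsub).sub continuousOn_const)
    have hbound : ∀ a ∈ Set.Ico s τ,
        ‖((t' a, x' a) : ℝ × EuclideanSpace ℝ (Fin 3))‖ ≤ 2*C*(σ * (2 * g a)) := by
      intro a ha
      have haI : a ∈ I := ⟨le_trans hs.1 ha.1, lt_trans ha.2 hτb⟩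
      have h := hvel a haI
      have h2 := hσg a haI
      nlinarith [mul_nonneg hCpos.le h2.le]
    have h0 : ‖((t s, x s) : ℝ × EuclideanSpace ℝ (Fin 3)) - (t s, x s)‖ ≤ 2*C*(F s - F s) := by
      simp
    have := image_norm_le_of_norm_deriv_right_le_deriv_boundary' hφc hφ' h0 hBc hB' hbound
      (right_mem_Icc.2 hsτ)
    exact this
  have hFmono : ∀ s ∈ I, ∀ τ, s ≤ τ → τ < b → F s ≤ F τ := by
    intro s hs τ hsτ hτb
    have h := hkey s hs τ hsτ hτb
    nlinarith [norm_nonneg (((t τ, x τ) : ℝ × EuclideanSpace ℝ (Fin 3)) - (t s, x s))]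
  -- supremum of F
  set L : ℝ := sSup (F '' I) with hLdef
  have hne : (F '' I).Nonempty := ⟨F 0, 0, h0I, rfl⟩
  have hbdd : BddAbove (F '' I) := by
    refine ⟨r₀^2, ?_⟩
    rintro _ ⟨a, ha, rfl⟩
    exact hFbdd a ha
  have hFle : ∀ τ ∈ I, F τ ≤ L := fun τ hτ => le_csSup hbdd ⟨τ, hτ, rfl⟩
  -- Cauchy
  have hmap : Cauchy (Filter.map (fun τ => ((t τ, x τ) : ℝ × EuclideanSpace ℝ (Fin 3)))
      (nhdsWithin b (Set.Iio b))) := by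
    rw [Metric.cauchy_iff]
    refine ⟨Filter.map_neBot, fun ε hε => ?_⟩
    have hε' : 0 < ε/(4*C) := by positivity
    obtain ⟨_, ⟨s₀, hs₀I, rfl⟩, hFs₀⟩ := exists_lt_of_lt_csSup hne
      (show L - ε/(4*C) < L by linarith)
    refine ⟨_, Filter.image_mem_map (Ico_mem_nhdsLT_of_mem ⟨hs₀I.2, le_refl b⟩), ?_⟩
    have main : ∀ a c : ℝ, a ∈ Set.Ico s₀ b → c ∈ Set.Ico s₀ b → a ≤ c →
        dist ((t a, x a) : ℝ × EuclideanSpace ℝ (Fin 3)) (t c, x c) < ε := by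
      intro a c ha hc hac
      have haI : a ∈ I := ⟨le_trans hs₀I.1 ha.1, ha.2⟩
      have hcI : c ∈ I := ⟨le_trans hs₀I.1 hc.1, hc.2⟩
      have h1' := hkey a haI c hac hc.2
      have h2' := hFmono s₀ hs₀I a ha.1 ha.2
      have h3' := hFle c hcI
      have h4' : 2*C*(ε/(4*C)) = ε/2 := by
        field_simp
        ring
      calc dist ((t a, x a) : ℝ × EuclideanSpace ℝ (Fin 3)) (t c, x c)
          = ‖((t c, x c) : ℝ × EuclideanSpace ℝ (Fin 3)) - (t a, x a)‖ := by
            rw [dist_eq_norm, norm_sub_rev]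
        _ ≤ 2*C*(F c - F a) := h1'
        _ ≤ 2*C*(ε/(4*C)) := by
            apply mul_le_mul_of_nonneg_left _ (by positivity)
            linarith
        _ = ε/2 := h4'
        _ < ε := by linarith
    rintro p ⟨a, ha, rfl⟩ q ⟨c, hc, rfl⟩
    rcases le_total a c with h | h
    · exact main a c ha hc h
    · rw [dist_comm]; exact main c a hc ha h
  obtain ⟨p, hp⟩ := cauchy_map_iff_exists_tendsto.1 hmap
  have hx2 : Filter.Tendsto (fun τ => ‖x τ‖) (𝓝[<] b) (𝓝 ‖p.2‖) :=
    (((continuous_snd.tendsto p).comp hp).norm)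
  have hpl : r₁ ≤ ‖p.2‖ := ge_of_tendsto hx2 (by
      filter_upwards [Ico_mem_nhdsLT_of_mem (show b ∈ Set.Ioc (0:ℝ) b from ⟨hb, le_refl b⟩)]
        with τ hτ using (hr τ hτ).1)
  have hpu : ‖p.2‖ ≤ r₀ := le_of_tendsto hx2 (by
      filter_upwards [Ico_mem_nhdsLT_of_mem (show b ∈ Set.Ioc (0:ℝ) b from ⟨hb, le_refl b⟩)]
        with τ hτ using (hr τ hτ).2)
  refine ⟨p, hp, hpl, hpu, ?_⟩
  · -- extension
    refine ⟨fun τ => if τ < b then ((t τ, x τ) : ℝ × EuclideanSpace ℝ (Fin 3)) else p, ?_, ?_, ?_⟩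
    · -- ContinuousOn
      intro τ hτ
      rcases hτ.2.lt_or_eq with hτb | heq
      · -- τ < b
        have hτI : τ ∈ I := ⟨hτ.1, hτb⟩
        have hIcc : I ∈ 𝓝[Set.Icc 0 b] τ :=
          mem_nhdsWithin.2 ⟨Set.Iio b, isOpen_Iio, hτb, fun z hz => ⟨hz.2.1, hz.1⟩⟩
        have hcw : ContinuousWithinAt (fun a => ((t a, x a) : ℝ × EuclideanSpace ℝ (Fin 3)))
            (Set.Icc 0 b) τ := (((htc.prodMk hxc) τ hτI).mono_of_mem_nhdsWithin hIcc)
        apply hcw.congr_of_eventuallyEq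
        · filter_upwards [nhdsWithin_le_nhds (Iio_mem_nhds hτb)] with a ha
          exact if_pos ha
        · exact if_pos hτb
      · -- τ = b
        rw [heq]
        have hγ'b : (if b < b then ((t b, x b) : ℝ × EuclideanSpace ℝ (Fin 3)) else p) = p :=
          if_neg (lt_irrefl b)
        show Filter.Tendsto _ (𝓝[Set.Icc 0 b] b)
          (𝓝 (if b < b then ((t b, x b) : ℝ × EuclideanSpace ℝ (Fin 3)) else p))
        rw [hγ'b]
        have hsub2 : Set.Icc 0 b ⊆ Set.Iio b ∪ {b} := by
          intro z hz
          rcases hz.2.lt_or_eq with h | h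
          · exact Or.inl h
          · exact Or.inr (by simp [h])
        refine Filter.Tendsto.mono_left ?_
          (le_trans (nhdsWithin_mono b hsub2) (le_of_eq (nhdsWithin_union b _ _)))
        rw [Filter.tendsto_sup]
        constructor
        · refine hp.congr' ?_
          filter_upwards [self_mem_nhdsWithin] with a ha
          exact (if_pos ha).symm
        · rw [nhdsWithin_singleton]
          have : Filter.Tendsto (fun τ => if τ < b then ((t τ, x τ) : ℝ × EuclideanSpace ℝ (Fin 3)) else p)
              (pure b) (𝓝 (if b < b then ((t b, x b) : ℝ × EuclideanSpace ℝ (Fin 3)) else p)) :=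
            tendsto_pure_nhds _ b
          rwa [hγ'b] at this
    · intro τ hτ
      exact if_pos hτ.2
    · intro τ hτ
      by_cases hτb : τ < b
      · have hτI : τ ∈ I := ⟨hτ.1, hτb⟩
        simp only [if_pos hτb]
        exact ⟨lt_of_lt_of_le h1 (hr τ hτI).1, lt_of_le_of_lt (hr τ hτI).2 h0⟩
      · simp only [if_neg hτb]
        exact ⟨lt_of_lt_of_le h1 hpl, lt_of_le_of_lt hpu h0⟩
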